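/- Let L be a first-order language, κ an infinite cardinal, and M a κ-compact L-structure. Let X ⊆ (Fin n → M) and Y ⊆ (Fin m → M) be ∅-definable, I an index set of cardinality less than κ, and (R i)_{i ∈ I} a family of ∅-definable subsets of ((Fin n ⊕ Fin m) → M), each contained in the product set {z | z ∘ Sum.inl ∈ X ∧ z ∘ Sum.inr ∈ Y}, which is downward directed under inclusion (for all i, j there is k with R k ⊆ R i ∩ R j). Suppose the intersection ⋂_{i ∈ I} R i is the graph of a total function φ : X → Y, i.e. for every x ∈ X there is exactly one y ∈ Y with the corresponding tuple in ⋂_i R i. Then there exists j ∈ I such that ⋂_{i ∈ I} R i = R j ∩ {z | z ∘ Sum.inl ∈ X ∧ z ∘ Sum.inr ∈ Y}; in particular ⋂_{i ∈ I} R i is ∅-definable and φ is an ∅-definable map. -/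

import Mathlib

open FirstOrder Cardinal

/-- An `L`-structure `M` is `κ`-compact if every set of fewer than `κ` formulas (in any
variable index type) that is finitely realized in `M` is realized in `M`. -/
def KappaCompact (L : FirstOrder.Language.{0, 0}) (κ : Cardinal.{0}) (M : Type)
    [L.Structure M] : Prop :=
  ∀ (α : Type) (Φ : Set (L.Formula α)), #Φ < κ →
    (∀ Φ₀ : Set (L.Formula α), Φ₀ ⊆ Φ → Φ₀.Finite →
      ∃ v : α → M, ∀ φ ∈ Φ₀, φ.Realize v) →
    ∃ v : α → M, ∀ φ ∈ Φ, φ.Realize v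

/-- A function `g` from a subset `X` of `Fin n → M` to `Fin m → M` is ∅-definable if its
graph is a ∅-definable subset of `(Fin n ⊕ Fin m) → M`. -/
def DefinableFun (L : FirstOrder.Language.{0, 0}) (M : Type) [L.Structure M]
    {n m : ℕ} (X : Set (Fin n → M)) (g : (Fin n → M) → (Fin m → M)) : Prop :=
  Set.Definable (∅ : Set M) L
    {z : Fin n ⊕ Fin m → M | z ∘ Sum.inl ∈ X ∧ g (z ∘ Sum.inl) = z ∘ Sum.inr}

/-- Directedness over finite sets of indices. -/
lemma exists_lb_of_finite {I : Type} [Nonempty I] {β : Type*} (R : I → Set β)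
    (hdir : ∀ i j, ∃ k, R k ⊆ R i ∩ R j) (J : Set I) (hJ : J.Finite) :
    ∃ k, ∀ i ∈ J, R k ⊆ R i := by
  classical
  have : ∀ s : Finset I, ∃ k, ∀ i ∈ s, R k ⊆ R i := by
    intro s
    induction s using Finset.induction_on with
    | empty => exact ⟨Classical.arbitrary I, by simp⟩
    | @insert i s _ ih =>
      obtain ⟨k₀, hk₀⟩ := ih
      obtain ⟨k, hk⟩ := hdir i k₀
      refine ⟨k, fun i' hi' => ?_⟩
      rcases Finset.mem_insert.mp hi' with rfl | hi'
      · exact fun z hz => (hk hz).1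
      · exact fun z hz => hk₀ i' hi' (hk hz).2
  obtain ⟨k, hk⟩ := this hJ.toFinset
  exact ⟨k, fun i hi => hk i (hJ.mem_toFinset.mpr hi)⟩

theorem directed_intersection_graph_definable
    (L : FirstOrder.Language.{0, 0}) (κ : Cardinal.{0}) (M : Type) [L.Structure M]
    (hκ : ℵ₀ ≤ κ) (hM : KappaCompact L κ M)
    {n m : ℕ} (X : Set (Fin n → M)) (hX : Set.Definable (∅ : Set M) L X)
    (Y : Set (Fin m → M)) (hY : Set.Definable (∅ : Set M) L Y)
    (I : Type) [Nonempty I] (hI : #I < κ)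
    (R : I → Set (Fin n ⊕ Fin m → M))
    (hR : ∀ i, Set.Definable (∅ : Set M) L (R i))
    (hsub : ∀ i, R i ⊆ {z | z ∘ Sum.inl ∈ X ∧ z ∘ Sum.inr ∈ Y})
    (hdir : ∀ i j, ∃ k, R k ⊆ R i ∩ R j)
    (hfun : ∀ x ∈ X, ∃! y, y ∈ Y ∧ Sum.elim x y ∈ ⋂ i, R i) :
    (∃ j, (⋂ i, R i) = R j ∩ {z | z ∘ Sum.inl ∈ X ∧ z ∘ Sum.inr ∈ Y}) ∧
      Set.Definable (∅ : Set M) L (⋂ i, R i) ∧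
      ∀ φ : (Fin n → M) → (Fin m → M),
        (∀ x ∈ X, φ x ∈ Y ∧ Sum.elim x (φ x) ∈ ⋂ i, R i) →
        DefinableFun L M X φ := by
  classical
  obtain ⟨φX, hφX⟩ := Set.empty_definable_iff.mp hX
  obtain ⟨φY, hφY⟩ := Set.empty_definable_iff.mp hY
  choose θ hθ using fun i => Set.empty_definable_iff.mp (hR i)
  set α := (Fin n ⊕ (Fin m ⊕ Fin m)) with hα
  -- relabeling maps
  set gx : Fin n → α := Sum.inl with hgx
  set gy : Fin m → α := Sum.inr ∘ Sum.inl with hgy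
  set gy' : Fin m → α := Sum.inr ∘ Sum.inr with hgy'
  set h₁ : Fin n ⊕ Fin m → α := Sum.elim Sum.inl (Sum.inr ∘ Sum.inl) with hh₁
  set h₂ : Fin n ⊕ Fin m → α := Sum.elim Sum.inl (Sum.inr ∘ Sum.inr) with hh₂
  -- the inequality formula
  set ψ : L.Formula α :=
    FirstOrder.Language.BoundedFormula.not
      (FirstOrder.Language.BoundedFormula.iInf
        (fun j : Fin m =>
          FirstOrder.Language.Term.equal
            (FirstOrder.Language.Term.var (gy j)) (FirstOrder.Language.Term.var (gy' j))))
    with hψ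
  have hψreal : ∀ v : α → M,
      FirstOrder.Language.Formula.Realize (L := L) (M := M) ψ v ↔ v ∘ gy ≠ v ∘ gy' := by
    intro v
    rw [hψ]
    simp [FirstOrder.Language.Formula.Realize, FirstOrder.Language.Term.equal, funext_iff,
      Function.comp]
  set f₁ : I → L.Formula α := fun i => (θ i).relabel h₁ with hf₁
  set f₂ : I → L.Formula α := fun i => (θ i).relabel h₂ with hf₂
  set Φ : Set (L.Formula α) :=
    ({φX.relabel gx, φY.relabel gy, φY.relabel gy', ψ} : Set (L.Formula α)) ∪
      Set.range f₁ ∪ Set.range f₂ with hΦ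
  -- key step : some `R j ∩ prod` is contained in the intersection
  have key : ∃ j, R j ∩ {z | z ∘ Sum.inl ∈ X ∧ z ∘ Sum.inr ∈ Y} ⊆ ⋂ i, R i := by
    by_contra hcon
    push_neg at hcon
    have hwit : ∀ j, ∃ z, z ∈ R j ∧ z ∘ Sum.inl ∈ X ∧ z ∘ Sum.inr ∈ Y ∧ z ∉ ⋂ i, R i := by
      intro j
      obtain ⟨z, hz, hz2⟩ := Set.not_subset.mp (hcon j)
      exact ⟨z, hz.1, hz.2.1, hz.2.2, hz2⟩
    -- cardinality bound
    have hcard : #Φ < κ := by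
      rw [hΦ]
      refine lt_of_le_of_lt (Cardinal.mk_union_le _ _) (Cardinal.add_lt_of_lt hκ
        (lt_of_le_of_lt (Cardinal.mk_union_le _ _) (Cardinal.add_lt_of_lt hκ ?_
          (lt_of_le_of_lt Cardinal.mk_range_le hI)))
        (lt_of_le_of_lt Cardinal.mk_range_le hI))
      exact lt_of_lt_of_le ((Set.toFinite _).lt_aleph0) hκ
    -- finite realizability
    have hfin : ∀ Φ₀ : Set (L.Formula α), Φ₀ ⊆ Φ → Φ₀.Finite →
        ∃ v : α → M, ∀ φ ∈ Φ₀, φ.Realize v := by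
      intro Φ₀ hΦ₀ hΦ₀fin
      set r₂ : L.Formula α → I := fun φ =>
        if h : ∃ i, f₂ i = φ then h.choose else Classical.arbitrary I with hr₂
      set J : Set I := r₂ '' Φ₀ with hJdef
      obtain ⟨k, hk⟩ := exists_lb_of_finite R hdir J (hΦ₀fin.image r₂)
      obtain ⟨z, hzk, hzX, hzY, hznot⟩ := hwit k
      obtain ⟨y, ⟨hyY, hyI⟩, hyuniq⟩ := hfun (z ∘ Sum.inl) hzX
      set x : Fin n → M := z ∘ Sum.inl with hxdef
      have hzelim : Sum.elim x (z ∘ Sum.inr) = z := Sum.elim_comp_inl_inr z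
      have hyne : y ≠ z ∘ Sum.inr := by
        intro h
        apply hznot
        rw [← hzelim, ← h]
        exact hyI
      refine ⟨Sum.elim x (Sum.elim y (z ∘ Sum.inr)), fun φ hφ => ?_⟩
      set v : α → M := Sum.elim x (Sum.elim y (z ∘ Sum.inr)) with hv
      have hvgx : v ∘ gx = x := rfl
      have hvgy : v ∘ gy = y := rfl
      have hvgy' : v ∘ gy' = z ∘ Sum.inr := rfl
      have hvh₁ : v ∘ h₁ = Sum.elim x y := by funext a; cases a <;> rfl
      have hvh₂ : v ∘ h₂ = z := by
        funext a; cases a with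
        | inl a => rfl
        | inr a => rfl
      rcases hΦ₀ hφ with ((h | h | h | h) | ⟨i, rfl⟩) | h
      · subst h
        rw [FirstOrder.Language.Formula.realize_relabel, hvgx]
        have : x ∈ X := hzX
        rwa [hφX] at this
      · subst h
        rw [FirstOrder.Language.Formula.realize_relabel, hvgy]
        rwa [hφY] at hyY
      · subst h
        rw [FirstOrder.Language.Formula.realize_relabel, hvgy']
        have : z ∘ Sum.inr ∈ Y := hzY
        rwa [hφY] at this
      · subst h
        rw [hψreal v, hvgy, hvgy']
        exact hyne
      · rw [hf₁]
        rw [FirstOrder.Language.Formula.realize_relabel, hvh₁]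
        have : Sum.elim x y ∈ R i := Set.mem_iInter.mp hyI i
        rwa [hθ i] at this
      · obtain ⟨i, rfl⟩ := h
        have hex : ∃ i', f₂ i' = f₂ i := ⟨i, rfl⟩
        have hr : f₂ (r₂ (f₂ i)) = f₂ i := by
          rw [hr₂]; simp only [dif_pos hex]; exact hex.choose_spec
        have hJmem : r₂ (f₂ i) ∈ J := Set.mem_image_of_mem r₂ hφ
        have hzRi : z ∈ R (r₂ (f₂ i)) := hk _ hJmem hzk
        rw [← hr, hf₂]
        rw [FirstOrder.Language.Formula.realize_relabel, hvh₂]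
        rwa [hθ _] at hzRi
    obtain ⟨v, hv⟩ := hM α Φ hcard hfin
    -- derive a contradiction from the realization
    set x : Fin n → M := v ∘ gx with hx
    set y : Fin m → M := v ∘ gy with hy
    set y' : Fin m → M := v ∘ gy' with hy'
    have hxX : x ∈ X := by
      have := hv (φX.relabel gx) (by rw [hΦ]; left; left; simp)
      rw [FirstOrder.Language.Formula.realize_relabel] at this
      rw [hφX]; exact this
    have hyY : y ∈ Y := by
      have := hv (φY.relabel gy) (by rw [hΦ]; left; left; simp)
      rw [FirstOrder.Language.Formula.realize_relabel] at this
      rw [hφY]; exact this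
    have hy'Y : y' ∈ Y := by
      have := hv (φY.relabel gy') (by rw [hΦ]; left; left; simp)
      rw [FirstOrder.Language.Formula.realize_relabel] at this
      rw [hφY]; exact this
    have hne : y ≠ y' := by
      have := hv ψ (by rw [hΦ]; left; left; simp)
      rw [hψreal] at this
      exact this
    have hyR : Sum.elim x y ∈ ⋂ i, R i := by
      refine Set.mem_iInter.mpr fun i => ?_
      have := hv (f₁ i) (by rw [hΦ]; left; right; exact ⟨i, rfl⟩)
      rw [hf₁, FirstOrder.Language.Formula.realize_relabel] at this
      have heq : v ∘ h₁ = Sum.elim x y := by funext a; cases a <;> rfl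
      rw [heq] at this
      rw [hθ i]; exact this
    have hy'R : Sum.elim x y' ∈ ⋂ i, R i := by
      refine Set.mem_iInter.mpr fun i => ?_
      have := hv (f₂ i) (by rw [hΦ]; right; exact ⟨i, rfl⟩)
      rw [hf₂, FirstOrder.Language.Formula.realize_relabel] at this
      have heq : v ∘ h₂ = Sum.elim x y' := by funext a; cases a <;> rfl
      rw [heq] at this
      rw [hθ i]; exact this
    obtain ⟨w, _, hwuniq⟩ := hfun x hxX
    exact hne ((hwuniq y ⟨hyY, hyR⟩).trans (hwuniq y' ⟨hy'Y, hy'R⟩).symm)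
  obtain ⟨j, hj⟩ := key
  have hIeq : (⋂ i, R i) = R j ∩ {z | z ∘ Sum.inl ∈ X ∧ z ∘ Sum.inr ∈ Y} := by
    apply Set.Subset.antisymm
    · intro z hz
      exact ⟨Set.mem_iInter.mp hz j, hsub j (Set.mem_iInter.mp hz j)⟩
    · exact hj
  have hprod : Set.Definable (∅ : Set M) L
      {z : Fin n ⊕ Fin m → M | z ∘ Sum.inl ∈ X ∧ z ∘ Sum.inr ∈ Y} := by
    have h1 := hX.preimage_comp (Sum.inl : Fin n → Fin n ⊕ Fin m)
    have h2 := hY.preimage_comp (Sum.inr : Fin m → Fin n ⊕ Fin m)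
    have := h1.inter h2
    exact this
  have hIdef : Set.Definable (∅ : Set M) L (⋂ i, R i) := by
    rw [hIeq]
    exact (hR j).inter hprod
  refine ⟨⟨j, hIeq⟩, hIdef, fun φ hφ => ?_⟩
  have hgraph : {z : Fin n ⊕ Fin m → M | z ∘ Sum.inl ∈ X ∧ φ (z ∘ Sum.inl) = z ∘ Sum.inr}
      = ⋂ i, R i := by
    ext z
    constructor
    · rintro ⟨hzX, hzφ⟩
      have : Sum.elim (z ∘ Sum.inl) (φ (z ∘ Sum.inl)) = z := by
        rw [hzφ]; exact Sum.elim_comp_inl_inr z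
      rw [← this]
      exact (hφ _ hzX).2
    · intro hz
      have hzj := Set.mem_iInter.mp hz j
      have hzprod := hsub j hzj
      refine ⟨hzprod.1, ?_⟩
      obtain ⟨w, _, hwuniq⟩ := hfun (z ∘ Sum.inl) hzprod.1
      have h1 : z ∘ Sum.inr = w := by
        apply hwuniq
        refine ⟨hzprod.2, ?_⟩
        rw [Sum.elim_comp_inl_inr z]
        exact hz
      have h2 : φ (z ∘ Sum.inl) = w :=
        hwuniq _ ⟨(hφ _ hzprod.1).1, (hφ _ hzprod.1).2⟩
      rw [h1, h2]
  rw [DefinableFun, hgraph]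
  exact hIdef
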